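/- Let p ≥ 0, k ≥ p + 1, n ≥ 2k − p + 2 be integers, and let f₁(x) = x³ − (3n+p−1)x² + (2n² + (2k+p)n − (2k+1)(k−p+1))x − (2n−1)(n−k+p−1)(k+1). Then f₁(2n−1) = (2n−1)(n−k−1)(k−p) > 0 and f₁′(x) > 0 for all x ≥ 2n−1; consequently every real root of f₁ is strictly less than 2n−1. -/

import Mathlib

/-- For integers `p ≥ 0`, `k ≥ p + 1`, `n ≥ 2k − p + 2` and the given
cubic `f₁`: `f₁(2n−1) = (2n−1)(n−k−1)(k−p) > 0` and `f₁′(x) > 0` for `x ≥ 2n−1`;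
consequently every real root of `f₁` is `< 2n−1`. -/
theorem stmt7 (p k n : ℕ) (hk : p + 1 ≤ k) (hn : 2 * k + 2 ≤ n + p) (f₁ : ℝ → ℝ)
    (hf : ∀ x : ℝ, f₁ x = x ^ 3 - (3 * (n : ℝ) + p - 1) * x ^ 2
        + (2 * (n : ℝ) ^ 2 + (2 * (k : ℝ) + p) * n
            - (2 * (k : ℝ) + 1) * ((k : ℝ) - p + 1)) * x
        - (2 * (n : ℝ) - 1) * ((n : ℝ) - k + p - 1) * ((k : ℝ) + 1)) :
    f₁ (2 * (n : ℝ) - 1) = (2 * (n : ℝ) - 1) * ((n : ℝ) - k - 1) * ((k : ℝ) - p) ∧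
    0 < f₁ (2 * (n : ℝ) - 1) ∧
    (∀ x : ℝ, 2 * (n : ℝ) - 1 ≤ x → 0 < deriv f₁ x) ∧
    ∀ x : ℝ, f₁ x = 0 → x < 2 * (n : ℝ) - 1 := by
  have hKP : (p : ℝ) + 1 ≤ (k : ℝ) := by exact_mod_cast hk
  have hNK : 2 * (k : ℝ) + 2 ≤ (n : ℝ) + p := by exact_mod_cast hn
  set P : ℝ := (p : ℝ) with hP
  set K : ℝ := (k : ℝ) with hK
  set N : ℝ := (n : ℝ) with hN
  have hP0 : 0 ≤ P := Nat.cast_nonneg p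
  -- value at 2n-1
  have hval : f₁ (2 * N - 1) = (2 * N - 1) * (N - K - 1) * (K - P) := by
    rw [hf]; ring
  have hvalpos : 0 < f₁ (2 * N - 1) := by
    rw [hval]
    have h1 : 0 < 2 * N - 1 := by nlinarith
    have h2 : 0 < N - K - 1 := by nlinarith
    have h3 : 0 < K - P := by nlinarith
    positivity
  -- derivative
  have hd : ∀ x : ℝ, HasDerivAt f₁
      (3 * x ^ 2 - 2 * (3 * N + P - 1) * x
        + (2 * N ^ 2 + (2 * K + P) * N - (2 * K + 1) * (K - P + 1))) x := by
    intro x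
    rw [funext hf]
    have h1 : HasDerivAt (fun x : ℝ => x ^ 3) (3 * x ^ 2) x := by
      simpa using hasDerivAt_pow 3 x
    have h2 : HasDerivAt (fun x : ℝ => (3 * N + P - 1) * x ^ 2)
        ((3 * N + P - 1) * (2 * x)) x := by
      simpa using (hasDerivAt_pow 2 x).const_mul (3 * N + P - 1)
    have h3 : HasDerivAt (fun x : ℝ =>
        (2 * N ^ 2 + (2 * K + P) * N - (2 * K + 1) * (K - P + 1)) * x)
        (2 * N ^ 2 + (2 * K + P) * N - (2 * K + 1) * (K - P + 1)) x := by
      simpa using (hasDerivAt_id x).const_mul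
        (2 * N ^ 2 + (2 * K + P) * N - (2 * K + 1) * (K - P + 1))
    have := ((h1.sub h2).add h3).sub_const ((2 * N - 1) * (N - K + P - 1) * (K + 1))
    refine this.congr_deriv ?_
    ring
  have ha : (0 : ℝ) ≤ K - P - 1 := by linarith
  have hb : (0 : ℝ) ≤ N + P - 2 * K - 2 := by linarith
  have hg0 : 0 < 2 * N ^ 2 + (2 * K - 3 * P - 2) * N + (2 * P + 1)
      - (2 * K + 1) * (K - P + 1) := by
    nlinarith [mul_nonneg ha ha, mul_nonneg hb hb, mul_nonneg ha hb,
      mul_nonneg ha hP0, mul_nonneg hb hP0, sq_nonneg P]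
  have hderivpos : ∀ x : ℝ, 2 * N - 1 ≤ x → 0 < deriv f₁ x := by
    intro x hx
    rw [(hd x).deriv]
    have hx' : 0 ≤ x - (2 * N - 1) := by linarith
    have hL : (0 : ℝ) ≤ 6 * N - 2 * P - 4 := by linarith
    nlinarith [sq_nonneg (x - (2 * N - 1)), mul_nonneg hL hx']
  refine ⟨hval, hvalpos, hderivpos, ?_⟩
  intro x hx0
  by_contra h
  push_neg at h
  have hcont : Continuous f₁ := by
    have : Differentiable ℝ f₁ := fun y => (hd y).differentiableAt
    exact this.continuous
  have hmono : StrictMonoOn f₁ (Set.Ici (2 * N - 1)) :=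
    strictMonoOn_of_deriv_pos (convex_Ici _) hcont.continuousOn
      (fun y hy => hderivpos y (by rw [interior_Ici] at hy; exact hy.le))
  rcases eq_or_lt_of_le h with heq | hlt
  · rw [← heq] at hx0; linarith
  · have := hmono Set.self_mem_Ici (Set.mem_Ici.2 h) hlt
    rw [hx0] at this
    linarith
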